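/- arXiv:2512.07645 — 2 statements merged into one kernel-verified Lean document; each statement's English description precedes it below -/
import Mathlib

section
/- Let Ω ⊂ ℝᴺ be a bounded open set, let s : ℝᴺ×ℝᴺ → (0,1) be continuous and symmetric with 0 < s⁻ ≤ s⁺ < 1, and let G : Ω̄×Ω̄×ℝ → ℝ be a generalized N-function satisfying the fractional boundedness condition: there exist C₁, C₂ > 0 with C₁ ≤ G(x,y,1) ≤ C₂ for all (x,y). Then every u ∈ C₀²(Ω) (twice continuously differentiable with compact support in Ω) belongs to the fractional Musielak–Sobolev space W^{s(·,·),G_{x,y}}(Ω), i.e. u ∈ L^{Ĝ_x}(Ω) and ∫_Ω∫_Ω G(x,y, λ(u(x)−u(y))/|x−y|^{s(x,y)}) dx dy/|x−y|ᴺ < ∞ for some λ > 0. -/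
open Filter Set MeasureTheory

private lemma carath {α : Type*} [MeasurableSpace α] (Φ : α → ℝ → ℝ)
    (hm : ∀ t : ℝ, Measurable fun a => Φ a t) (hc : ∀ a, Continuous (Φ a))
    {F : α → ℝ} (hF : Measurable F) : Measurable fun a => Φ a (F a) := by
  have key : ∀ n : ℕ, Measurable fun a => Φ a ((⌈F a * ((n : ℝ) + 1)⌉ : ℝ) / ((n : ℝ) + 1)) := by
    intro n
    have h1 : Measurable fun a => (a, ⌈F a * ((n : ℝ) + 1)⌉) :=
      measurable_id.prodMk (hF.mul_const _).ceil
    have h2 : Measurable fun q : α × ℤ => Φ q.1 ((q.2 : ℝ) / ((n : ℝ) + 1)) :=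
      measurable_from_prod_countable_left fun k => by
        simpa using hm ((k : ℝ) / ((n : ℝ) + 1))
    exact h2.comp h1
  apply measurable_of_tendsto_metrizable key
  rw [tendsto_pi_nhds]
  intro a
  have hto : Tendsto (fun n : ℕ => (⌈F a * ((n : ℝ) + 1)⌉ : ℝ) / ((n : ℝ) + 1)) atTop
      (nhds (F a)) := by
    have hlow : ∀ n : ℕ, F a ≤ (⌈F a * ((n : ℝ) + 1)⌉ : ℝ) / ((n : ℝ) + 1) := by
      intro n
      rw [le_div_iff₀ (by positivity)]
      exact Int.le_ceil _
    have hhigh : ∀ n : ℕ, (⌈F a * ((n : ℝ) + 1)⌉ : ℝ) / ((n : ℝ) + 1) ≤ F a + 1 / ((n : ℝ) + 1) := by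
      intro n
      rw [div_le_iff₀ (by positivity)]
      have h := (Int.ceil_lt_add_one (F a * ((n : ℝ) + 1))).le
      calc (⌈F a * ((n : ℝ) + 1)⌉ : ℝ) ≤ F a * ((n : ℝ) + 1) + 1 := h
        _ = (F a + 1 / ((n : ℝ) + 1)) * ((n : ℝ) + 1) := by field_simp
    have h1 : Tendsto (fun n : ℕ => F a + 1 / ((n : ℝ) + 1)) atTop (nhds (F a)) := by
      simpa using (tendsto_const_nhds (x := F a)).add tendsto_one_div_add_atTop_nhds_zero_nat
    exact tendsto_of_tendsto_of_tendsto_of_le_of_le tendsto_const_nhds h1 hlow hhigh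
  exact ((hc a).tendsto (F a)).comp hto

private lemma measurable_rpow_const' {α : Type*} [MeasurableSpace α] {f : α → ℝ}
    (hf : Measurable f) (hpos : ∀ a, 0 ≤ f a) {r : ℝ} (hr : r ≠ 0) :
    Measurable fun a => f a ^ r := by
  have heq : (fun a => f a ^ r) = fun a =>
      if f a = 0 then 0 else Real.exp (Real.log (f a) * r) := by
    funext a
    by_cases h : f a = 0
    · rw [if_pos h, h, Real.zero_rpow hr]
    · rw [if_neg h, Real.rpow_def_of_pos (lt_of_le_of_ne (hpos a) (Ne.symm h))]
  rw [heq]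
  exact Measurable.ite (hf (measurableSet_singleton 0)) measurable_const
    ((Real.measurable_log.comp hf).mul_const r).exp

private lemma riesz_finite {N : ℕ} (hN : 0 < N) {r : ℝ} (hrN : -(N : ℝ) < r) (hr0 : r < 0)
    {c : ℝ} (hc : 0 < c) :
    ∫⁻ v : EuclideanSpace ℝ (Fin N) in Metric.closedBall 0 c, ENNReal.ofReal (‖v‖ ^ r) < ⊤ := by
  set E := EuclideanSpace ℝ (Fin N)
  set f : E → ℝ := (Metric.closedBall (0 : E) c).indicator (fun v => ‖v‖ ^ r) with hfdef
  have hfm : Measurable f := (measurable_rpow_const' measurable_norm (fun v => norm_nonneg v) hr0.ne).indicator Metric.isClosed_closedBall.measurableSet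
  have h1 : ∫⁻ v : E in Metric.closedBall 0 c, ENNReal.ofReal (‖v‖ ^ r)
      = ∫⁻ v : E, ENNReal.ofReal (f v) := by
    rw [← lintegral_indicator Metric.isClosed_closedBall.measurableSet]
    congr 1
    funext v
    rw [hfdef]
    by_cases h : v ∈ Metric.closedBall (0 : E) c <;> simp [h]
  have hnn : 0 ≤ᵐ[volume] f :=
    Eventually.of_forall (indicator_nonneg (fun x _ => Real.rpow_nonneg (norm_nonneg x) r))
  rw [h1, lintegral_eq_lintegral_meas_le volume hnn hfm.aemeasurable]
  have hsub1 : ∀ t : ℝ, 0 < t → {a : E | t ≤ f a} ⊆ Metric.closedBall 0 c := by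
    intro t ht a ha
    simp only [mem_setOf_eq, hfdef] at ha
    by_contra hmem
    rw [indicator_of_notMem hmem] at ha
    linarith
  have hsub2 : ∀ t : ℝ, 0 < t → {a : E | t ≤ f a} ⊆ Metric.closedBall 0 (t ^ r⁻¹) := by
    intro t ht a ha
    have hmem : a ∈ Metric.closedBall (0 : E) c := hsub1 t ht ha
    simp only [mem_setOf_eq, hfdef, indicator_of_mem hmem] at ha
    have hna : 0 < ‖a‖ := by
      rcases eq_or_lt_of_le (norm_nonneg a) with h | h
      · exfalso
        rw [← h, Real.zero_rpow hr0.ne] at ha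
        linarith
      · exact h
    rw [mem_closedBall_zero_iff]
    exact (Real.le_rpow_inv_iff_of_neg hna ht hr0).2 ha
  calc ∫⁻ t in Ioi (0:ℝ), volume {a : E | t ≤ f a}
      ≤ (∫⁻ t in Ioc (0:ℝ) 1, volume {a : E | t ≤ f a})
        + ∫⁻ t in Ioi (1:ℝ), volume {a : E | t ≤ f a} := by
        rw [← Ioc_union_Ioi_eq_Ioi (zero_le_one (α := ℝ))]
        exact lintegral_union_le _ _ _
    _ < ⊤ := by
        refine ENNReal.add_lt_top.2 ⟨?_, ?_⟩
        · calc ∫⁻ t in Ioc (0:ℝ) 1, volume {a : E | t ≤ f a}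
              ≤ ∫⁻ _ in Ioc (0:ℝ) 1, volume (Metric.closedBall (0 : E) c) :=
                setLIntegral_mono' measurableSet_Ioc fun t ht => measure_mono (hsub1 t ht.1)
            _ = volume (Metric.closedBall (0 : E) c) * volume (Ioc (0:ℝ) 1) := by
                rw [setLIntegral_const]
            _ < ⊤ := by
                refine ENNReal.mul_lt_top measure_closedBall_lt_top ?_
                simp [Real.volume_Ioc]
        · have hexp : (N : ℝ) * r⁻¹ < -1 := by
            rw [← div_eq_mul_inv, div_lt_iff_of_neg hr0]
            linarith
          calc ∫⁻ t in Ioi (1:ℝ), volume {a : E | t ≤ f a}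
              ≤ ∫⁻ t in Ioi (1:ℝ),
                  ENNReal.ofReal (t ^ ((N : ℝ) * r⁻¹)) * volume (Metric.ball (0 : E) 1) := by
                refine setLIntegral_mono' measurableSet_Ioi fun t ht => ?_
                have ht0 : (0:ℝ) < t := lt_trans zero_lt_one ht
                refine (measure_mono (hsub2 t ht0)).trans_eq ?_
                rw [Measure.addHaar_closedBall _ _ (Real.rpow_nonneg ht0.le _)]
                congr 2
                rw [finrank_euclideanSpace_fin, ← Real.rpow_natCast (t ^ r⁻¹) N,
                  ← Real.rpow_mul ht0.le, mul_comm]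
            _ = (∫⁻ t in Ioi (1:ℝ), ENNReal.ofReal (t ^ ((N : ℝ) * r⁻¹)))
                  * volume (Metric.ball (0 : E) 1) :=
                lintegral_mul_const' _ _ measure_ball_lt_top.ne
            _ < ⊤ := by
                refine ENNReal.mul_lt_top ?_ measure_ball_lt_top
                exact (integrableOn_Ioi_rpow_of_lt hexp zero_lt_one).lintegral_lt_top

private lemma prod_integrable {N : ℕ} (hN : 0 < N) {Ω : Set (EuclideanSpace ℝ (Fin N))}
    (hΩm : MeasurableSet Ω) (hbd : Bornology.IsBounded Ω) {r : ℝ} (hrN : -(N : ℝ) < r)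
    (hr0 : r < 0) :
    IntegrableOn (fun p : EuclideanSpace ℝ (Fin N) × EuclideanSpace ℝ (Fin N) =>
      dist p.1 p.2 ^ r) (Ω ×ˢ Ω) := by
  obtain ⟨R, hR⟩ := hbd.subset_closedBall 0
  set c : ℝ := 2 * max R 0 + 1 with hcdef
  have hc : 0 < c := by positivity
  have hm : Measurable fun p : EuclideanSpace ℝ (Fin N) × EuclideanSpace ℝ (Fin N) =>
      dist p.1 p.2 ^ r :=
    measurable_rpow_const' continuous_dist.measurable (fun p => dist_nonneg) hr0.ne
  constructor
  · exact hm.aestronglyMeasurable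
  · rw [hasFiniteIntegral_iff_norm]
    have hnorm : ∀ p : EuclideanSpace ℝ (Fin N) × EuclideanSpace ℝ (Fin N),
        ENNReal.ofReal ‖dist p.1 p.2 ^ r‖
        = ENNReal.ofReal (dist p.1 p.2 ^ r) := by
      intro p
      rw [Real.norm_eq_abs, abs_of_nonneg (Real.rpow_nonneg dist_nonneg r)]
    simp_rw [hnorm]
    have hprod : (volume : Measure (EuclideanSpace ℝ (Fin N) × EuclideanSpace ℝ (Fin N))).restrict
          (Ω ×ˢ Ω)
        = (volume.restrict Ω).prod (volume.restrict Ω) := by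
      rw [Measure.prod_restrict, ← Measure.volume_eq_prod]
    rw [hprod, lintegral_prod _ (hm.ennreal_ofReal.aemeasurable)]
    set K := ∫⁻ v : EuclideanSpace ℝ (Fin N) in Metric.closedBall 0 c, ENNReal.ofReal (‖v‖ ^ r) with hKdef
    have hK : K < ⊤ := riesz_finite hN hrN hr0 hc
    have key : ∀ x : EuclideanSpace ℝ (Fin N), x ∈ Ω → ∫⁻ y in Ω, ENNReal.ofReal (dist x y ^ r) ≤ K := by
      intro x hx
      have hsub : Ω ⊆ Metric.closedBall x c := by
        intro y hy
        rw [Metric.mem_closedBall]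
        have h1 : dist y x ≤ dist y 0 + dist 0 x := dist_triangle _ _ _
        have h2 : dist y 0 ≤ max R 0 :=
          le_trans (hR hy) (le_max_left _ _)
        have h3 : dist 0 x ≤ max R 0 := by
          rw [dist_comm]; exact le_trans (hR hx) (le_max_left _ _)
        rw [hcdef]; linarith
      calc ∫⁻ y in Ω, ENNReal.ofReal (dist x y ^ r)
          ≤ ∫⁻ y in Metric.closedBall x c, ENNReal.ofReal (dist x y ^ r) :=
            lintegral_mono_set hsub
        _ = K := by
            rw [← lintegral_indicator Metric.isClosed_closedBall.measurableSet]
            rw [hKdef, ← lintegral_indicator Metric.isClosed_closedBall.measurableSet]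
            rw [← lintegral_add_left_eq_self
              (f := (Metric.closedBall x c).indicator fun y => ENNReal.ofReal (dist x y ^ r)) x]
            congr 1
            funext v
            by_cases h : v ∈ Metric.closedBall (0 : EuclideanSpace ℝ (Fin N)) c
            · rw [indicator_of_mem h]
              have h' : x + v ∈ Metric.closedBall x c := by
                rw [Metric.mem_closedBall, dist_comm, dist_self_add_right]
                exact mem_closedBall_zero_iff.1 h
              rw [indicator_of_mem h', dist_self_add_right]
            · rw [indicator_of_notMem h]
              have h' : x + v ∉ Metric.closedBall x c := by
                rw [Metric.mem_closedBall, dist_comm, dist_self_add_right]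
                exact fun hh => h (mem_closedBall_zero_iff.2 hh)
              rw [indicator_of_notMem h']
    calc ∫⁻ x in Ω, ∫⁻ y in Ω, ENNReal.ofReal (dist x y ^ r)
        ≤ ∫⁻ _ in Ω, K := setLIntegral_mono' hΩm key
      _ = K * volume Ω := setLIntegral_const _ _
      _ < ⊤ := ENNReal.mul_lt_top hK hbd.measure_lt_top

set_option maxHeartbeats 1000000 in
/-- Theorem 2.5: `C₀²(Ω) ⊂ W^{s(·,·),G_{x,y}}(Ω)` under the fractional
boundedness condition `C₁ ≤ G(x,y,1) ≤ C₂`. -/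
theorem stmt_10 (N : ℕ) (Ω : Set (EuclideanSpace ℝ (Fin N)))
    (hΩopen : IsOpen Ω) (hΩbd : Bornology.IsBounded Ω)
    (s : EuclideanSpace ℝ (Fin N) → EuclideanSpace ℝ (Fin N) → ℝ)
    (hscont : Continuous (fun p : EuclideanSpace ℝ (Fin N) × EuclideanSpace ℝ (Fin N) => s p.1 p.2))
    (hsym : ∀ x y, s x y = s y x)
    (sm sp : ℝ) (hsm : 0 < sm) (hsp : sp < 1)
    (hsbounds : ∀ x y, sm ≤ s x y ∧ s x y ≤ sp)
    (G : EuclideanSpace ℝ (Fin N) → EuclideanSpace ℝ (Fin N) → ℝ → ℝ)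
    -- `G` is a generalized N-function
    (hmeas : ∀ t : ℝ, Measurable (fun p : EuclideanSpace ℝ (Fin N) × EuclideanSpace ℝ (Fin N) => G p.1 p.2 t))
    (heven : ∀ x y t, G x y (-t) = G x y t)
    (hconv : ∀ x y, ConvexOn ℝ Set.univ (G x y))
    (hcont : ∀ x y, Continuous (G x y))
    (hmono : ∀ x y, StrictMonoOn (G x y) (Set.Ici 0))
    (hG0 : ∀ x y, G x y 0 = 0)
    (hGpos : ∀ x y, ∀ t > (0:ℝ), 0 < G x y t)
    (hsuper : ∀ x y, Tendsto (fun t => G x y t / t) atTop atTop)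
    (hzero : ∀ x y, Tendsto (fun t => G x y t / t) (nhdsWithin 0 (Set.Ioi 0)) (nhds 0))
    -- fractional boundedness condition `G ∈ B_f`
    (C₁ C₂ : ℝ) (hC₁ : 0 < C₁) (hC₂ : 0 < C₂)
    (hBf : ∀ x y, C₁ ≤ G x y 1 ∧ G x y 1 ≤ C₂)
    (u : EuclideanSpace ℝ (Fin N) → ℝ)
    (hu : ContDiff ℝ 2 u) (husupp : HasCompactSupport u)
    (hsupp : tsupport u ⊆ Ω) :
    (∃ l > (0:ℝ), IntegrableOn (fun x => G x x (l * |u x|)) Ω) ∧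
    (∃ l > (0:ℝ), IntegrableOn
      (fun p : EuclideanSpace ℝ (Fin N) × EuclideanSpace ℝ (Fin N) =>
        G p.1 p.2 (l * (u p.1 - u p.2) / dist p.1 p.2 ^ s p.1 p.2) / dist p.1 p.2 ^ (N:ℝ))
      (Ω ×ˢ Ω)) := by
  classical
  obtain ⟨M, hM⟩ := husupp.exists_bound_of_continuous hu.continuous
  have hMabs : ∀ x, |u x| ≤ M := fun x => by
    have := hM x; rwa [Real.norm_eq_abs] at this
  have hM0 : 0 ≤ M := le_trans (abs_nonneg (u 0)) (hMabs 0)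
  obtain ⟨K, hK⟩ := hu.lipschitzWith_of_hasCompactSupport husupp two_ne_zero
  set L : ℝ := (K : ℝ) with hLdef
  have hL0 : 0 ≤ L := K.coe_nonneg
  have hLip : ∀ x y, |u x - u y| ≤ L * dist x y := by
    intro x y
    have h := hK.dist_le_mul x y
    rwa [Real.dist_eq] at h
  have hGnonneg : ∀ (x y : EuclideanSpace ℝ (Fin N)) (t : ℝ), 0 ≤ t → 0 ≤ G x y t := by
    intro x y t ht
    have h := (hmono x y).monotoneOn (mem_Ici.2 le_rfl) (mem_Ici.2 ht) ht
    rwa [hG0] at h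
  have hkey : ∀ (x y : EuclideanSpace ℝ (Fin N)) (t : ℝ), 0 ≤ t → t ≤ 1 → G x y t ≤ C₂ * t := by
    intro x y t ht ht1
    have h := (hconv x y).2 (mem_univ (1:ℝ)) (mem_univ (0:ℝ)) ht (by linarith : (0:ℝ) ≤ 1 - t)
      (by ring)
    simp only [smul_eq_mul, mul_one, mul_zero, add_zero, hG0] at h
    have h2 : t * G x y 1 ≤ t * C₂ := mul_le_mul_of_nonneg_left (hBf x y).2 ht
    calc G x y t ≤ t * G x y 1 := h
      _ ≤ t * C₂ := h2
      _ = C₂ * t := mul_comm _ _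
  have habsG : ∀ (x y : EuclideanSpace ℝ (Fin N)) (t : ℝ), |G x y t| = G x y |t| := by
    intro x y t
    rcases abs_cases t with ⟨h1, h2⟩ | ⟨h1, h2⟩
    · rw [h1, abs_of_nonneg (hGnonneg x y t h2)]
    · have he : G x y t = G x y (-t) := by rw [← heven x y (-t), neg_neg]
      rw [h1, he, abs_of_nonneg (hGnonneg x y (-t) (by linarith))]
  constructor
  · -- part 1
    refine ⟨(M + 1)⁻¹, by positivity, ?_⟩
    have hmeasf : Measurable fun x : EuclideanSpace ℝ (Fin N) => G x x ((M + 1)⁻¹ * |u x|) := by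
      refine carath (fun x t => G x x t)
        (fun t => (hmeas t).comp (measurable_id.prodMk measurable_id))
        (fun x => hcont x x) ?_
      exact (continuous_const.mul hu.continuous.abs).measurable
    have hbound : ∀ x : EuclideanSpace ℝ (Fin N), ‖G x x ((M + 1)⁻¹ * |u x|)‖ ≤ C₂ := by
      intro x
      have harg0 : 0 ≤ (M + 1)⁻¹ * |u x| := by positivity
      have harg1 : (M + 1)⁻¹ * |u x| ≤ 1 := by
        rw [inv_mul_le_iff₀ (by positivity : (0:ℝ) < M + 1), mul_one]
        linarith [hMabs x]
      rw [Real.norm_eq_abs, abs_of_nonneg (hGnonneg _ _ _ harg0)]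
      calc G x x ((M + 1)⁻¹ * |u x|) ≤ C₂ * ((M + 1)⁻¹ * |u x|) := hkey _ _ _ harg0 harg1
        _ ≤ C₂ * 1 := mul_le_mul_of_nonneg_left harg1 hC₂.le
        _ = C₂ := mul_one _
    have hμΩ : volume Ω < ⊤ := hΩbd.measure_lt_top
    exact (integrableOn_const hμΩ.ne).mono' hmeasf.aestronglyMeasurable
      (ae_of_all _ hbound)
  · -- part 2
    rcases Nat.eq_zero_or_pos N with hN0 | hN
    · subst hN0
      refine ⟨1, one_pos, ?_⟩
      have hsub : ∀ a b : EuclideanSpace ℝ (Fin 0), a = b := by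
        intro a b
        refine PiLp.ext fun i => ?_
        exact i.elim0
      have hzz : (fun p : EuclideanSpace ℝ (Fin 0) × EuclideanSpace ℝ (Fin 0) =>
          G p.1 p.2 (1 * (u p.1 - u p.2) / dist p.1 p.2 ^ s p.1 p.2)
            / dist p.1 p.2 ^ ((0:ℕ):ℝ)) = fun _ => (0:ℝ) := by
        funext p
        rw [hsub p.1 p.2]
        simp [hG0]
      rw [hzz]
      exact integrableOn_zero
    · have hsmsp : sm ≤ sp := le_trans (hsbounds 0 0).1 (hsbounds 0 0).2
      have hsp0 : (0:ℝ) < sp := lt_of_lt_of_le hsm hsmsp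
      have hN1 : (1:ℝ) ≤ N := by exact_mod_cast hN
      set r : ℝ := 1 - sp - N with hrdef
      have hrN : -(N : ℝ) < r := by rw [hrdef]; linarith
      have hr0 : r < 0 := by rw [hrdef]; linarith
      set l : ℝ := (1 + L + 2 * M)⁻¹ with hldef
      have hl0 : 0 < l := by positivity
      have hlsum : l * (1 + L + 2 * M) = 1 := inv_mul_cancel₀ (by positivity)
      refine ⟨l, hl0, ?_⟩
      have hspos : ∀ x y : EuclideanSpace ℝ (Fin N), 0 < s x y := fun x y =>
        lt_of_lt_of_le hsm (hsbounds x y).1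
      have hFmeas : Measurable fun p : EuclideanSpace ℝ (Fin N) × EuclideanSpace ℝ (Fin N) =>
          l * (u p.1 - u p.2) / dist p.1 p.2 ^ s p.1 p.2 := by
        refine Measurable.div ?_ ?_
        · exact (continuous_const.mul ((hu.continuous.comp continuous_fst).sub
            (hu.continuous.comp continuous_snd))).measurable
        · refine (Continuous.rpow continuous_dist hscont ?_).measurable
          intro p
          exact Or.inr (hspos p.1 p.2)
      have hfmeas : Measurable (fun p : EuclideanSpace ℝ (Fin N) × EuclideanSpace ℝ (Fin N) =>
          G p.1 p.2 (l * (u p.1 - u p.2) / dist p.1 p.2 ^ s p.1 p.2)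
            / dist p.1 p.2 ^ (N:ℝ)) := by
        refine Measurable.div ?_
          (measurable_rpow_const' continuous_dist.measurable (fun p => dist_nonneg)
            (by exact_mod_cast hN.ne' : (N:ℝ) ≠ 0))
        exact carath (fun p t => G p.1 p.2 t) hmeas (fun p => hcont p.1 p.2) hFmeas
      have hΩm : MeasurableSet Ω := hΩopen.measurableSet
      have hint : IntegrableOn (fun p : EuclideanSpace ℝ (Fin N) × EuclideanSpace ℝ (Fin N) =>
          C₂ * dist p.1 p.2 ^ r + C₂) (Ω ×ˢ Ω) := by
        refine ((prod_integrable hN hΩm hΩbd hrN hr0).const_mul C₂).add ?_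
        exact integrableOn_const (hΩbd.prod hΩbd).measure_lt_top.ne
      refine hint.mono' hfmeas.aestronglyMeasurable (ae_of_all _ ?_)
      rintro ⟨x, y⟩
      simp only
      set d : ℝ := dist x y with hddef
      set A : ℝ := l * (u x - u y) / d ^ s x y with hAdef
      have hd0 : 0 ≤ d := dist_nonneg
      have hg0 : 0 ≤ C₂ * d ^ r := by positivity
      rcases eq_or_lt_of_le hd0 with hd | hd
      · -- d = 0
        have hxy : x = y := by
          rw [← dist_eq_zero (x := x) (y := y), ← hddef, ← hd]
        have hA0 : A = 0 := by
          rw [hAdef, hxy, sub_self, mul_zero, zero_div]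
        rw [hA0, hG0, zero_div, norm_zero]
        linarith
      · -- d > 0
        have hds : 0 < d ^ s x y := Real.rpow_pos_of_pos hd _
        have hdN : 0 < d ^ (N:ℝ) := Real.rpow_pos_of_pos hd _
        have hnorm : ‖G x y A / d ^ (N:ℝ)‖ = G x y |A| / d ^ (N:ℝ) := by
          rw [Real.norm_eq_abs, abs_div, abs_of_pos hdN, habsG]
        rw [hnorm]
        have hAabs : |A| = l * |u x - u y| / d ^ s x y := by
          rw [hAdef, abs_div, abs_of_pos hds, abs_mul, abs_of_pos hl0]
        rcases le_or_gt d 1 with hd1 | hd1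
        · -- 0 < d ≤ 1
          have hA1 : |A| ≤ d ^ (1 - sp) := by
            rw [hAabs, div_le_iff₀ hds]
            have h1 : l * |u x - u y| ≤ l * (L * d) :=
              mul_le_mul_of_nonneg_left (hLip x y) hl0.le
            have h2 : l * L ≤ 1 := by
              have hle : L ≤ 1 + L + 2 * M := by linarith
              calc l * L ≤ l * (1 + L + 2 * M) := mul_le_mul_of_nonneg_left hle hl0.le
                _ = 1 := hlsum
            have h3 : d ^ (1 - sp) * d ^ s x y = d ^ (1 - sp + s x y) :=
              (Real.rpow_add hd _ _).symm
            have h4 : d ≤ d ^ (1 - sp + s x y) := by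
              have : d ^ (1:ℝ) ≤ d ^ (1 - sp + s x y) := by
                apply Real.rpow_le_rpow_of_exponent_ge hd hd1
                have := (hsbounds x y).2
                linarith
              rwa [Real.rpow_one] at this
            calc l * |u x - u y| ≤ l * (L * d) := h1
              _ = (l * L) * d := by ring
              _ ≤ 1 * d := mul_le_mul_of_nonneg_right h2 hd.le
              _ = d := one_mul d
              _ ≤ d ^ (1 - sp + s x y) := h4
              _ = d ^ (1 - sp) * d ^ s x y := h3.symm
          have hA2 : |A| ≤ 1 := hA1.trans (Real.rpow_le_one hd0 hd1 (by linarith))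
          have hGA : G x y |A| ≤ C₂ * d ^ (1 - sp) := by
            calc G x y |A| ≤ C₂ * |A| := hkey x y _ (abs_nonneg _) hA2
              _ ≤ C₂ * d ^ (1 - sp) := mul_le_mul_of_nonneg_left hA1 hC₂.le
          calc G x y |A| / d ^ (N:ℝ) ≤ (C₂ * d ^ (1 - sp)) / d ^ (N:ℝ) :=
                (div_le_div_iff_of_pos_right hdN).2 hGA
            _ = C₂ * d ^ r := by
                rw [mul_div_assoc, ← Real.rpow_sub hd, hrdef]
            _ ≤ C₂ * d ^ r + C₂ := by linarith
        · -- d > 1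
          have hds1 : 1 ≤ d ^ s x y := by
            have h := Real.rpow_le_rpow_of_exponent_le hd1.le (le_of_lt (hspos x y))
            rwa [Real.rpow_zero] at h
          have hdN1 : 1 ≤ d ^ (N:ℝ) := by
            have h := Real.rpow_le_rpow_of_exponent_le hd1.le (Nat.cast_nonneg N : (0:ℝ) ≤ N)
            rwa [Real.rpow_zero] at h
          have hA2 : |A| ≤ 1 := by
            rw [hAabs, div_le_one hds]
            have h1 : |u x - u y| ≤ 2 * M := by
              calc |u x - u y| ≤ |u x| + |u y| := abs_sub _ _
                _ ≤ 2 * M := by linarith [hMabs x, hMabs y]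
            have h2 : l * (2 * M) ≤ 1 := by
              have hle : 2 * M ≤ 1 + L + 2 * M := by linarith
              calc l * (2 * M) ≤ l * (1 + L + 2 * M) := mul_le_mul_of_nonneg_left hle hl0.le
                _ = 1 := hlsum
            calc l * |u x - u y| ≤ l * (2 * M) := mul_le_mul_of_nonneg_left h1 hl0.le
              _ ≤ 1 := h2
              _ ≤ d ^ s x y := hds1
          have hGA : G x y |A| ≤ C₂ := by
            calc G x y |A| ≤ C₂ * |A| := hkey x y _ (abs_nonneg _) hA2
              _ ≤ C₂ * 1 := mul_le_mul_of_nonneg_left hA2 hC₂.le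
              _ = C₂ := mul_one _
          calc G x y |A| / d ^ (N:ℝ) ≤ C₂ / d ^ (N:ℝ) :=
                (div_le_div_iff_of_pos_right hdN).2 hGA
            _ ≤ C₂ := div_le_self hC₂.le hdN1
            _ ≤ C₂ * d ^ r + C₂ := by linarith
end

section
/- Let Ω ⊂ ℝᴺ be a measurable set, h : Ω → [0,∞) measurable with h > 0 a.e., m : Ω → (0,1) measurable, and u₀ : Ω → [0,∞) measurable with u₀ > 0 a.e. Let φ ≥ 0 be measurable. Then, with F(t) = ∫_Ω h(x)·((u₀+tφ)^{1−m(x)} − u₀^{1−m(x)})/(t(1−m(x))) dx for t > 0, one has liminf_{t→0⁺} F(t) ≥ ∫_Ω h(x) u₀(x)^{−m(x)} φ(x) dx. -/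
open Filter Set MeasureTheory

/-- Bernoulli-type estimate: for `0 < u`, `0 ≤ b`, `0 < c ≤ 1`,
`(u + b) ^ c ≤ u ^ c + c * u ^ (c - 1) * b`. -/
lemma stmt_19_bern {u b c : ℝ} (hu : 0 < u) (hb : 0 ≤ b) (hc0 : 0 ≤ c) (hc1 : c ≤ 1) :
    (u + b) ^ c ≤ u ^ c + c * u ^ (c - 1) * b := by
  have hs : (0:ℝ) ≤ b / u := div_nonneg hb hu.le
  have hber : (1 + b / u) ^ c ≤ 1 + c * (b / u) :=
    rpow_one_add_le_one_add_mul_self (by linarith) hc0 hc1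
  have hrw : u + b = u * (1 + b / u) := by field_simp
  calc (u + b) ^ c = u ^ c * (1 + b / u) ^ c := by
        rw [hrw, Real.mul_rpow hu.le (by linarith)]
    _ ≤ u ^ c * (1 + c * (b / u)) := by
        exact mul_le_mul_of_nonneg_left hber (Real.rpow_nonneg hu.le c)
    _ = u ^ c + c * (u ^ c / u) * b := by field_simp
    _ = u ^ c + c * u ^ (c - 1) * b := by
        rw [← Real.rpow_sub_one hu.ne' c]

/-- Inequality (3.11): Fatou-type lower bound for the difference quotient of
the singular term as `t → 0⁺`. -/
theorem stmt_19 (N : ℕ) (Ω : Set (EuclideanSpace ℝ (Fin N)))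
    (hΩmeas : MeasurableSet Ω)
    (h : EuclideanSpace ℝ (Fin N) → ℝ) (hh : Measurable h)
    (hhnonneg : ∀ x, 0 ≤ h x)
    (hhpos : ∀ᵐ x ∂(volume.restrict Ω), 0 < h x)
    (m : EuclideanSpace ℝ (Fin N) → ℝ) (hm : Measurable m)
    (hmrange : ∀ x ∈ Ω, 0 < m x ∧ m x < 1)
    (u₀ : EuclideanSpace ℝ (Fin N) → ℝ) (hu₀ : Measurable u₀)
    (hu₀nonneg : ∀ x, 0 ≤ u₀ x)
    (hu₀pos : ∀ᵐ x ∂(volume.restrict Ω), 0 < u₀ x)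
    (φ : EuclideanSpace ℝ (Fin N) → ℝ) (hφ : Measurable φ)
    (hφnonneg : ∀ x, 0 ≤ φ x) :
    (∫ x in Ω, h x * u₀ x ^ (-(m x)) * φ x) ≤
      Filter.liminf
        (fun t : ℝ => ∫ x in Ω,
          h x * ((u₀ x + t * φ x) ^ (1 - m x) - u₀ x ^ (1 - m x)) / (t * (1 - m x)))
        (nhdsWithin 0 (Set.Ioi 0)) := by
  set g : EuclideanSpace ℝ (Fin N) → ℝ := fun x => h x * u₀ x ^ (-(m x)) * φ x with hgdef
  set F : ℝ → EuclideanSpace ℝ (Fin N) → ℝ := fun t x =>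
    h x * ((u₀ x + t * φ x) ^ (1 - m x) - u₀ x ^ (1 - m x)) / (t * (1 - m x)) with hFdef
  -- a.e. good points
  have hae : ∀ᵐ x ∂(volume.restrict Ω), x ∈ Ω ∧ 0 < u₀ x ∧ 0 < h x :=
    ((ae_restrict_mem hΩmeas).and (hu₀pos.and hhpos)).mono (fun x hx => ⟨hx.1, hx.2.1, hx.2.2⟩)
  -- pointwise bounds
  have hbd : ∀ x, x ∈ Ω → 0 < u₀ x → ∀ t, 0 < t → 0 ≤ F t x ∧ F t x ≤ g x := by
    intro x hxΩ hu t ht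
    obtain ⟨hm0, hm1⟩ := hmrange x hxΩ
    have hc0 : (0:ℝ) < 1 - m x := by linarith
    have hnum : u₀ x ^ (1 - m x) ≤ (u₀ x + t * φ x) ^ (1 - m x) :=
      Real.rpow_le_rpow (hu₀nonneg x) (by nlinarith [hφnonneg x]) hc0.le
    constructor
    · exact div_nonneg (mul_nonneg (hhnonneg x) (by linarith)) (by positivity)
    · have hber := stmt_19_bern hu (mul_nonneg ht.le (hφnonneg x)) hc0.le (by linarith)
      have hstep : h x * ((u₀ x + t * φ x) ^ (1 - m x) - u₀ x ^ (1 - m x)) ≤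
          h x * ((1 - m x) * u₀ x ^ (1 - m x - 1) * (t * φ x)) :=
        mul_le_mul_of_nonneg_left (by linarith) (hhnonneg x)
      have hexp : u₀ x ^ (1 - m x - 1) = u₀ x ^ (-(m x)) := by norm_num
      calc F t x ≤ h x * ((1 - m x) * u₀ x ^ (1 - m x - 1) * (t * φ x)) / (t * (1 - m x)) :=
            by exact (div_le_div_iff_of_pos_right (by positivity : (0:ℝ) < t * (1 - m x))).mpr hstep
        _ = g x := by rw [hexp]; field_simp [hgdef]; ring
  -- pointwise convergence
  have hlim : ∀ᵐ x ∂(volume.restrict Ω),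
      Tendsto (fun t => F t x) (nhdsWithin 0 (Set.Ioi 0)) (nhds (g x)) := by
    filter_upwards [hae] with x hx
    obtain ⟨hxΩ, hu, -⟩ := hx
    obtain ⟨hm0, hm1⟩ := hmrange x hxΩ
    have hc0 : (0:ℝ) < 1 - m x := by linarith
    have hinner : HasDerivAt (fun t : ℝ => u₀ x + t * φ x) (φ x) 0 :=
      ((hasDerivAt_mul_const (φ x)).const_add (u₀ x))
    have houter : HasDerivAt (fun t : ℝ => (u₀ x + t * φ x) ^ (1 - m x))
        (φ x * (1 - m x) * (u₀ x + 0 * φ x) ^ (1 - m x - 1)) 0 :=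
      hinner.rpow_const (Or.inl (by simpa using hu.ne'))
    have hslope := hasDerivAt_iff_tendsto_slope.mp houter
    have hslope' : Tendsto (slope (fun t : ℝ => (u₀ x + t * φ x) ^ (1 - m x)) 0)
        (nhdsWithin 0 (Set.Ioi 0))
        (nhds (φ x * (1 - m x) * (u₀ x + 0 * φ x) ^ (1 - m x - 1))) :=
      hslope.mono_left (nhdsWithin_mono 0 (fun t ht => ne_of_gt ht))
    have hmul : Tendsto (fun t => h x / (1 - m x) *
        slope (fun t : ℝ => (u₀ x + t * φ x) ^ (1 - m x)) 0 t)
        (nhdsWithin 0 (Set.Ioi 0))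
        (nhds (h x / (1 - m x) * (φ x * (1 - m x) * (u₀ x + 0 * φ x) ^ (1 - m x - 1)))) :=
      hslope'.const_mul _
    have heq : ∀ t : ℝ, h x / (1 - m x) *
        slope (fun t : ℝ => (u₀ x + t * φ x) ^ (1 - m x)) 0 t = F t x := by
      intro t
      rw [slope_def_field]
      simp only [hFdef]
      field_simp
      ring
    have hval : h x / (1 - m x) * (φ x * (1 - m x) * (u₀ x + 0 * φ x) ^ (1 - m x - 1)) = g x := by
      have hexp : u₀ x ^ (1 - m x - 1) = u₀ x ^ (-(m x)) := by norm_num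
      field_simp [hgdef]
      simp only [hgdef, mul_zero, add_zero, hexp]; ring
    rw [← hval]
    exact hmul.congr heq
  -- measurability
  have hFm : ∀ t : ℝ, AEStronglyMeasurable (F t) (volume.restrict Ω) := by
    intro t
    refine ((((hh.mul (((hu₀.add (measurable_const.mul hφ)).pow
      (measurable_const.sub hm)).sub (hu₀.pow (measurable_const.sub hm))))).div
      (measurable_const.mul (measurable_const.sub hm)))).aestronglyMeasurable
  by_cases hint : Integrable g (volume.restrict Ω)
  · -- dominated convergence
    have hbound : ∀ᶠ t in nhdsWithin (0:ℝ) (Set.Ioi 0),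
        ∀ᵐ x ∂(volume.restrict Ω), ‖F t x‖ ≤ g x := by
      filter_upwards [self_mem_nhdsWithin] with t ht
      filter_upwards [hae] with x hx
      obtain ⟨h1, h2⟩ := hbd x hx.1 hx.2.1 t ht
      rwa [Real.norm_eq_abs, abs_of_nonneg h1]
    have htend : Tendsto (fun t => ∫ x in Ω, F t x) (nhdsWithin 0 (Set.Ioi 0))
        (nhds (∫ x in Ω, g x)) :=
      tendsto_integral_filter_of_dominated_convergence g
        (Eventually.of_forall hFm) hbound hint hlim
    rw [htend.liminf_eq]
  · rw [integral_undef hint]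
    have hev : ∀ᶠ t in nhdsWithin (0:ℝ) (Set.Ioi 0), (0:ℝ) ≤ ∫ x in Ω, F t x := by
      filter_upwards [self_mem_nhdsWithin] with t ht
      refine integral_nonneg_of_ae ?_
      filter_upwards [hae] with x hx
      exact (hbd x hx.1 hx.2.1 t ht).1
    rw [Filter.liminf_eq]
    by_cases hbdd : BddAbove {a : ℝ | ∀ᶠ t in nhdsWithin (0:ℝ) (Set.Ioi 0), a ≤ ∫ x in Ω, F t x}
    · exact le_csSup hbdd hev
    · rw [Real.sSup_of_not_bddAbove hbdd]
end
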